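/- Let U be a nonprincipal ultrafilter on ℕ that is not a Q-point, and let f be any nondecreasing unbounded function ℕ → ℕ. Then there exists an increasing function φ : ℕ → ℕ such that the pushforward φ(U), which is isomorphic to U, is not f-quasi-selective. -/

import Mathlib

def Nonprincipal (U : Ultrafilter ℕ) : Prop := ∀ A : Set ℕ, A.Finite → A ∉ U

def UnboundedModU (U : Ultrafilter ℕ) (f : ℕ → ℕ) : Prop := ∀ n : ℕ, {x | n < f x} ∈ U

def NondecrModU (U : Ultrafilter ℕ) (g : ℕ → ℕ) : Prop :=
  ∃ A ∈ U, ∀ x ∈ A, ∀ y ∈ A, x ≤ y → g x ≤ g y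

def QSfor (U : Ultrafilter ℕ) (f : ℕ → ℕ) : Prop :=
  ∀ g : ℕ → ℕ, {x | g x ≤ f x} ∈ U → NondecrModU U g

def Selective (U : Ultrafilter ℕ) : Prop := ∀ g : ℕ → ℕ, NondecrModU U g

def Rapid (U : Ultrafilter ℕ) : Prop :=
  ∀ g : ℕ → ℕ, StrictMono g → ∃ A ∈ U, ∀ n, 1 ≤ n → (A ∩ Set.Iic (g n)).ncard < n

def WeaklyRamsey (U : Ultrafilter ℕ) : Prop :=
  ∀ (k : ℕ) (c : ℕ → ℕ → Fin k), ∃ A ∈ U, ∃ i j : Fin k,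
    ∀ x ∈ A, ∀ y ∈ A, x < y → c x y = i ∨ c x y = j

def leU (U : Ultrafilter ℕ) (f g : ℕ → ℕ) : Prop := {x | f x ≤ g x} ∈ U

def QPoint (U : Ultrafilter ℕ) : Prop :=
  ∀ p : ℕ → ℕ, p 0 = 0 → StrictMono p →
    ∃ A ∈ U, ∀ n, (A ∩ Set.Ico (p n) (p (n+1))).Subsingleton

theorem stmt11 (U : Ultrafilter ℕ) (hNP : Nonprincipal U) (hQ : ¬ QPoint U)
    (f : ℕ → ℕ) (hf : Monotone f) (hUnb : ∀ n, ∃ x, n < f x) :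
    ∃ φ : ℕ → ℕ, StrictMono φ ∧ ¬ QSfor (Ultrafilter.map φ U) f := by
  classical
  -- extract a bad partition
  rw [QPoint] at hQ
  push_neg at hQ
  obtain ⟨p, hp0, hpmono, hbad⟩ := hQ
  -- interval index
  set I : ℕ → ℕ := fun x => Nat.findGreatest (fun n => p n ≤ x) x with hI
  have hIle : ∀ x, p (I x) ≤ x := by
    intro x
    have := Nat.findGreatest_spec (P := fun n => p n ≤ x) (m := 0) (Nat.zero_le x) (by simp [hp0])
    exact this
  have hIlt : ∀ x, x < p (I x + 1) := by
    intro x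
    by_contra h
    push_neg at h
    have h1 : I x + 1 ≤ x := le_trans (hpmono.le_apply) h
    exact absurd h (Nat.findGreatest_is_greatest (P := fun n => p n ≤ x)
      (Nat.lt_succ_self _) h1)
  have hIuniq : ∀ x n, p n ≤ x → x < p (n+1) → I x = n := by
    intro x n h1 h2
    have a : I x < n + 1 := hpmono.lt_iff_lt.mp (lt_of_le_of_lt (hIle x) h2)
    have b : n < I x + 1 := hpmono.lt_iff_lt.mp (lt_of_le_of_lt h1 (hIlt x))
    omega
  -- build φ
  set w : ℕ → ℕ := fun n => Classical.choose (hUnb n) with hw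
  have hwspec : ∀ n, n < f (w n) := fun n => Classical.choose_spec (hUnb n)
  set φ : ℕ → ℕ := fun n => Nat.rec (w (p 1)) (fun n ih => max (ih + 1) (w (p (n+2)))) n with hφ
  have hφsucc : ∀ n, φ (n+1) = max (φ n + 1) (w (p (n+2))) := fun n => rfl
  have hφmono : StrictMono φ := by
    apply strictMono_nat_of_lt_succ
    intro n
    rw [hφsucc]
    omega
  have hφf : ∀ x, p (x+1) ≤ f (φ x) := by
    intro x
    cases x with
    | zero => exact le_of_lt (hwspec (p 1))
    | succ n =>
      have : w (p (n+2)) ≤ φ (n+1) := by rw [hφsucc]; omega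
      exact le_trans (le_of_lt (hwspec (p (n+2)))) (hf this)
  -- define g
  set g : ℕ → ℕ := fun m =>
    if h : ∃ x, φ x = m then p (I (Classical.choose h) + 1) - 1 - Classical.choose h else 0
    with hg
  have hgφ : ∀ x, g (φ x) = p (I x + 1) - 1 - x := by
    intro x
    have hex : ∃ y, φ y = φ x := ⟨x, rfl⟩
    have : Classical.choose hex = x := hφmono.injective (Classical.choose_spec hex)
    simp only [hg, dif_pos hex, this]
  refine ⟨φ, hφmono, ?_⟩
  intro hQS
  have hle : {x | g x ≤ f x} ∈ Ultrafilter.map φ U := by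
    rw [Ultrafilter.mem_map]
    have : (φ ⁻¹' {x | g x ≤ f x}) = Set.univ := by
      ext x
      simp only [Set.mem_preimage, Set.mem_setOf_eq, Set.mem_univ, iff_true]
      have h1 := hgφ x
      have h2 : p (I x + 1) ≤ p (x + 1) := hpmono.monotone (by
        have : I x ≤ x := Nat.findGreatest_le x
        omega)
      have h3 := hφf x
      omega
    rw [this]
    exact Filter.univ_mem
  obtain ⟨A, hA, hmon⟩ := hQS g hle
  rw [Ultrafilter.mem_map] at hA
  obtain ⟨n, hn⟩ := hbad (φ ⁻¹' A) hA
  obtain ⟨x, hx, y, hy, hxy⟩ := hn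
  obtain ⟨hxA, hxlo, hxhi⟩ : x ∈ φ ⁻¹' A ∧ p n ≤ x ∧ x < p (n+1) := ⟨hx.1, hx.2.1, hx.2.2⟩
  obtain ⟨hyA, hylo, hyhi⟩ : y ∈ φ ⁻¹' A ∧ p n ≤ y ∧ y < p (n+1) := ⟨hy.1, hy.2.1, hy.2.2⟩
  -- WLOG x < y
  wlog hlt : x < y generalizing x y
  · exact this y hy x hx hxy.symm hyA hylo hyhi hxA hxlo hxhi (by omega)
  have hIx : I x = n := hIuniq x n hxlo hxhi
  have hIy : I y = n := hIuniq y n hylo hyhi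
  have hmono := hmon (φ x) hxA (φ y) hyA (le_of_lt (hφmono hlt))
  rw [hgφ, hgφ, hIx, hIy] at hmono
  omega
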